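/- In the Burling construction, for every k ≥ 1 and every proper coloring φ of G_k, there exists a probe P of G_k such that φ uses at least k distinct colors on the vertices of P. -/

import Mathlib

/-- Probe index type for the Burling construction: level `n` corresponds to the graph
`G_{n+1}` of the paper. A probe of level `n + 1` is given by a probe `P` of the outer
copy, a probe `Q` of the inner copy placed in `P`, and a Boolean flag (`false` = lower
probe `P ∪ Q`, `true` = upper probe `P ∪ {d_{P,Q}}`). -/
def BurlingProbeIdx : ℕ → Type
  | 0 => Unit
  | n + 1 => BurlingProbeIdx n × BurlingProbeIdx n × Bool

/-- Vertex type of the Burling graph of level `n` (the graph `G_{n+1}` of the paper):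
level `n + 1` consists of an outer copy of level `n`, an inner copy of level `n` for
each probe `P`, and a diagonal vertex `d_{P,Q}` for each probe `P` of the outer copy
and each probe `Q` of the inner copy attached to `P`. -/
def BurlingVertex : ℕ → Type
  | 0 => Unit
  | n + 1 =>
      BurlingVertex n ⊕
        (BurlingProbeIdx n × BurlingVertex n) ⊕
        (BurlingProbeIdx n × BurlingProbeIdx n)

instance instFintypeBurlingProbeIdx : ∀ n, Fintype (BurlingProbeIdx n)
  | 0 => inferInstanceAs (Fintype Unit)
  | n + 1 =>
      letI := instFintypeBurlingProbeIdx n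
      inferInstanceAs (Fintype (BurlingProbeIdx n × BurlingProbeIdx n × Bool))

instance instFintypeBurlingVertex : ∀ n, Fintype (BurlingVertex n)
  | 0 => inferInstanceAs (Fintype Unit)
  | n + 1 =>
      letI := instFintypeBurlingVertex n
      inferInstanceAs (Fintype (BurlingVertex n ⊕
        (BurlingProbeIdx n × BurlingVertex n) ⊕
        (BurlingProbeIdx n × BurlingProbeIdx n)))

/-- The set of vertices pierced by a probe in the Burling construction. -/
def burlingProbe : (n : ℕ) → BurlingProbeIdx n → Set (BurlingVertex n)
  | 0, _ => Set.univ
  | n + 1, ⟨P, Q, b⟩ =>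
      (Sum.inl '' burlingProbe n P) ∪
        (if b then {Sum.inr (Sum.inr (P, Q))}
         else (fun v => Sum.inr (Sum.inl (P, v))) '' burlingProbe n Q)

/-- One-directional adjacency relation generating the Burling graph of level `n`. -/
def burlingRel : (n : ℕ) → BurlingVertex n → BurlingVertex n → Prop
  | 0, _, _ => False
  | n + 1, x, y =>
      match x, y with
      | Sum.inl u, Sum.inl v => burlingRel n u v
      | Sum.inr (Sum.inl (P, u)), Sum.inr (Sum.inl (P', v)) => P = P' ∧ burlingRel n u v
      | Sum.inr (Sum.inr (P, Q)), Sum.inr (Sum.inl (P', v)) => P = P' ∧ v ∈ burlingProbe n Q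
      | _, _ => False

/-- The Burling graph of level `n` (the graph `G_{n+1}` of the paper). -/
def BurlingGraph (n : ℕ) : SimpleGraph (BurlingVertex n) :=
  SimpleGraph.fromRel (burlingRel n)


lemma burlingGraph_adj_outer {n : ℕ} {u v : BurlingVertex n}
    (h : (BurlingGraph n).Adj u v) :
    (BurlingGraph (n+1)).Adj (Sum.inl u) (Sum.inl v) := by
  rw [BurlingGraph, SimpleGraph.fromRel_adj] at h
  exact (SimpleGraph.fromRel_adj _ _ _).2 ⟨fun hh => h.1 (Sum.inl_injective hh), h.2⟩

lemma burlingGraph_adj_inner {n : ℕ} (P : BurlingProbeIdx n) {u v : BurlingVertex n}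
    (h : (BurlingGraph n).Adj u v) :
    (BurlingGraph (n+1)).Adj (Sum.inr (Sum.inl (P, u))) (Sum.inr (Sum.inl (P, v))) := by
  rw [BurlingGraph, SimpleGraph.fromRel_adj] at h
  refine (SimpleGraph.fromRel_adj _ _ _).2 ⟨fun hh => ?_, ?_⟩
  · have : u = v := by
      have := Sum.inr_injective hh
      have := Sum.inl_injective this
      exact congrArg Prod.snd this
    exact h.1 this
  · rcases h.2 with h2 | h2
    · exact Or.inl ⟨rfl, h2⟩
    · exact Or.inr ⟨rfl, h2⟩

lemma burlingGraph_adj_diag {n : ℕ} (P Q : BurlingProbeIdx n) {v : BurlingVertex n}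
    (hv : v ∈ burlingProbe n Q) :
    (BurlingGraph (n+1)).Adj (Sum.inr (Sum.inr (P, Q))) (Sum.inr (Sum.inl (P, v))) := by
  exact (SimpleGraph.fromRel_adj _ _ _).2 ⟨fun h => by simpa using Sum.inr_injective h, Or.inl ⟨rfl, hv⟩⟩

lemma burlingProbe_finite {n : ℕ} (i : BurlingProbeIdx n) : (burlingProbe n i).Finite :=
  letI := instFintypeBurlingVertex n
  Set.toFinite _

/-- In the Burling construction, every proper coloring of `G_k` uses at least `k`
distinct colors on the vertices of some probe. (Level `n` here is the graph `G_{n+1}`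
of the paper, so some probe receives at least `n + 1` colors.) -/
theorem burlingGraph_coloring_probe (n : ℕ) (α : Type)
    (C : (BurlingGraph n).Coloring α) :
    ∃ i : BurlingProbeIdx n, n + 1 ≤ (C '' burlingProbe n i).ncard := by
  induction n with
  | zero =>
    refine ⟨(), ?_⟩
    have hne : (C '' burlingProbe 0 ()).Nonempty := ⟨C (), ⟨(), trivial, rfl⟩⟩
    have hfin : (C '' burlingProbe 0 ()).Finite := ((burlingProbe_finite (n := 0) ()).image C)
    exact (Set.ncard_pos hfin).2 hne
  | succ n ih =>
    -- coloring of the outer copy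
    let Cout : (BurlingGraph n).Coloring α :=
      SimpleGraph.Coloring.mk (fun v => C (Sum.inl v))
        (fun h => C.valid (burlingGraph_adj_outer h))
    obtain ⟨P, hP⟩ := ih Cout
    let Cin : (BurlingGraph n).Coloring α :=
      SimpleGraph.Coloring.mk (fun v => C (Sum.inr (Sum.inl (P, v))))
        (fun h => C.valid (burlingGraph_adj_inner P h))
    obtain ⟨Q, hQ⟩ := ih Cin
    set A : Set α := C '' (Sum.inl '' burlingProbe n P) with hAdef
    set B : Set α := C '' ((fun v => Sum.inr (Sum.inl (P, v))) '' burlingProbe n Q) with hBdef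
    have hA : n + 1 ≤ A.ncard := by
      exact hP.trans_eq (congrArg Set.ncard (Set.image_comp C Sum.inl (burlingProbe n P)))
    have hB : n + 1 ≤ B.ncard := by
      exact hQ.trans_eq (congrArg Set.ncard (Set.image_comp C (fun v => Sum.inr (Sum.inl (P, v))) (burlingProbe n Q)))
    have hAfin : A.Finite := ((burlingProbe_finite P).image _).image C
    have hBfin : B.Finite := ((burlingProbe_finite Q).image _).image C
    set c : α := C (Sum.inr (Sum.inr (P, Q))) with hcdef
    have hcB : c ∉ B := by
      rintro ⟨_, ⟨v, hv, rfl⟩, hc⟩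
      exact C.valid (burlingGraph_adj_diag P Q hv) hc.symm
    by_cases hcA : c ∈ A
    · refine ⟨(P, Q, false), ?_⟩
      have himg : C '' burlingProbe (n+1) (P, Q, false) = A ∪ B := by
        show C '' ((Sum.inl '' burlingProbe n P) ∪ _) = _
        simp [Set.image_union, hAdef, hBdef]
      rw [himg]
      have h1 : insert c B ⊆ A ∪ B := Set.insert_subset (Or.inl hcA) Set.subset_union_right
      have h2 : (insert c B).ncard = B.ncard + 1 := Set.ncard_insert_of_notMem hcB hBfin
      calc n + 1 + 1 ≤ B.ncard + 1 := by omega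
        _ = (insert c B).ncard := h2.symm
        _ ≤ (A ∪ B).ncard := Set.ncard_le_ncard h1 (hAfin.union hBfin)
    · refine ⟨(P, Q, true), ?_⟩
      have himg : C '' burlingProbe (n+1) (P, Q, true) = insert c A := by
        show C '' ((Sum.inl '' burlingProbe n P) ∪ {Sum.inr (Sum.inr (P, Q))}) = _
        exact (Set.image_union C _ _).trans ((congrArg (A ∪ ·) Set.image_singleton).trans Set.union_singleton)
      rw [himg, Set.ncard_insert_of_notMem hcA hAfin]
      omega
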